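/- Let K ⊆ ℂⁿ be a nonempty closed subset. Then the support function h_K(ζ) := inf_{z∈K} Re⟨z,ζ⟩, viewed as a function on the unit sphere of ℂⁿ with values in {−∞} ∪ ℝ, is upper semi-continuous; moreover h_K is real-valued (h_K(ζ) > −∞) and continuous at every point of ĤPC(K). -/

import Mathlib

open Filter Topology

/-- The bilinear pairing `⟨z, ζ⟩ = Σ_k z_k ζ_k` on `ℂⁿ`. -/
noncomputable def pairing {n : ℕ} (z ζ : EuclideanSpace ℂ (Fin n)) : ℂ :=
  ∑ k, z k * ζ k

noncomputable def conjVec {n : ℕ} (z : EuclideanSpace ℂ (Fin n)) :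
    EuclideanSpace ℂ (Fin n) := WithLp.toLp 2 (fun k => (starRingEnd ℂ) (z k))

lemma pairing_eq_inner {n : ℕ} (z w : EuclideanSpace ℂ (Fin n)) :
    pairing z w = inner ℂ (conjVec z) w := by
  simp [pairing, conjVec, PiLp.inner_apply, RCLike.inner_apply]
  exact Finset.sum_congr rfl fun _ _ => mul_comm _ _

lemma pairing_comm {n : ℕ} (z w : EuclideanSpace ℂ (Fin n)) :
    pairing z w = pairing w z := by
  simp [pairing, mul_comm]

lemma norm_conjVec {n : ℕ} (z : EuclideanSpace ℂ (Fin n)) : ‖conjVec z‖ = ‖z‖ := by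
  simp [conjVec, EuclideanSpace.norm_eq]

lemma abs_pairing_le {n : ℕ} (z w : EuclideanSpace ℂ (Fin n)) :
    ‖pairing z w‖ ≤ ‖z‖ * ‖w‖ := by
  rw [pairing_eq_inner]
  calc ‖(inner ℂ (conjVec z) w : ℂ)‖ ≤ ‖conjVec z‖ * ‖w‖ := norm_inner_le_norm _ _
  _ = ‖z‖ * ‖w‖ := by rw [norm_conjVec]

lemma pairing_sub_right {n : ℕ} (z ξ ξ' : EuclideanSpace ℂ (Fin n)) :
    pairing z (ξ - ξ') = pairing z ξ - pairing z ξ' := by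
  simp [pairing, mul_sub, Finset.sum_sub_distrib]

lemma re_pairing_le {n : ℕ} (z ξ ξ' : EuclideanSpace ℂ (Fin n)) :
    (pairing z ξ).re ≤ (pairing z ξ').re + ‖z‖ * ‖ξ - ξ'‖ := by
  have h1 : (pairing z ξ).re - (pairing z ξ').re = (pairing z (ξ - ξ')).re := by
    rw [pairing_sub_right, Complex.sub_re]
  have h2 : (pairing z (ξ - ξ')).re ≤ ‖pairing z (ξ - ξ')‖ := Complex.re_le_norm _
  have := abs_pairing_le z (ξ - ξ')
  linarith

lemma continuous_re_pairing_right {n : ℕ} (z : EuclideanSpace ℂ (Fin n)) :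
    Continuous fun ξ : EuclideanSpace ℂ (Fin n) => (pairing z ξ).re := by
  have : Continuous fun ξ : EuclideanSpace ℂ (Fin n) => (inner ℂ (conjVec z) ξ : ℂ) :=
    Continuous.inner continuous_const continuous_id
  have h2 := Complex.continuous_re.comp this
  have : (fun ξ : EuclideanSpace ℂ (Fin n) => (pairing z ξ).re)
      = fun ξ => (inner ℂ (conjVec z) ξ : ℂ).re := by
    funext ξ; rw [pairing_eq_inner]
  rw [this]; exact h2

lemma continuous_re_pairing_left {n : ℕ} (ξ : EuclideanSpace ℂ (Fin n)) :
    Continuous fun z : EuclideanSpace ℂ (Fin n) => (pairing z ξ).re := by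
  simpa [pairing_comm _ ξ] using continuous_re_pairing_right ξ

lemma re_pairing_smul {n : ℕ} (r : ℝ) (z ξ : EuclideanSpace ℂ (Fin n)) :
    (pairing (r • z) ξ).re = r * (pairing z ξ).re := by
  simp [pairing, Complex.real_smul, Finset.mul_sum, mul_assoc, Complex.re_sum,
    Finset.mul_sum, mul_sub]

/-- `θ` is an asymptotic direction of `Z ⊆ ℂⁿ`. -/
def IsAsympDir {n : ℕ} (Z : Set (EuclideanSpace ℂ (Fin n)))
    (θ : EuclideanSpace ℂ (Fin n)) : Prop :=
  ‖θ‖ = 1 ∧ ∃ u : ℕ → EuclideanSpace ℂ (Fin n),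
    (∀ k, u k ∈ Z) ∧ Tendsto (fun k => ‖u k‖) atTop atTop ∧
    Tendsto (fun k => (‖u k‖)⁻¹ • u k) atTop (𝓝 θ)

/-- `ĤPC(Z)`: the set of unit vectors `ζ` with `Re⟨θ,ζ⟩ > 0` for every asymptotic
direction `θ` of `Z`. -/
noncomputable def HPC {n : ℕ} (Z : Set (EuclideanSpace ℂ (Fin n))) :
    Set (EuclideanSpace ℂ (Fin n)) :=
  {ζ | ‖ζ‖ = 1 ∧ ∀ θ, IsAsympDir Z θ → 0 < (pairing θ ζ).re}

lemma exists_coercive {n : ℕ} (K : Set (EuclideanSpace ℂ (Fin n)))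
    {ζ : EuclideanSpace ℂ (Fin n)} (hζ : ζ ∈ HPC K) :
    ∃ c > (0:ℝ), ∃ R : ℝ, ∀ z ∈ K, R ≤ ‖z‖ → c * ‖z‖ ≤ (pairing z ζ).re := by
  by_contra h
  push_neg at h
  choose u hu1 hu2 hu3 using fun k : ℕ =>
    h (1/((k:ℝ)+1)) (by positivity) ((k:ℝ)+1)
  have hupos : ∀ k, (0:ℝ) < ‖u k‖ := fun k =>
    lt_of_lt_of_le (by positivity) (hu2 k)
  set v : ℕ → EuclideanSpace ℂ (Fin n) := fun k => (‖u k‖)⁻¹ • u k with hv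
  have hvmem : ∀ k, v k ∈ Metric.sphere (0 : EuclideanSpace ℂ (Fin n)) 1 := by
    intro k
    rw [mem_sphere_zero_iff_norm, hv, norm_smul, norm_inv, norm_norm,
      inv_mul_cancel₀ (hupos k).ne']
  obtain ⟨θ, hθs, φ, hφ, hconv⟩ :=
    (isCompact_sphere (0 : EuclideanSpace ℂ (Fin n)) 1).tendsto_subseq hvmem
  have hθ1 : ‖θ‖ = 1 := mem_sphere_zero_iff_norm.mp hθs
  have hasymp : IsAsympDir K θ := by
    refine ⟨hθ1, fun k => u (φ k), fun k => hu1 (φ k), ?_, hconv⟩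
    have h1 : Tendsto (fun k : ℕ => (k:ℝ)+1) atTop atTop :=
      tendsto_atTop_add_const_right _ 1 tendsto_natCast_atTop_atTop
    refine tendsto_atTop_mono (fun k => ?_) h1
    calc (k:ℝ)+1 ≤ (φ k : ℝ)+1 := by
          have : (k:ℝ) ≤ (φ k : ℝ) := Nat.cast_le.mpr hφ.le_apply
          linarith
    _ ≤ ‖u (φ k)‖ := hu2 (φ k)
  have hpos := hζ.2 θ hasymp
  -- bound on the values
  have hvlt : ∀ k, (pairing (v k) ζ).re < 1/((k:ℝ)+1) := by
    intro k
    rw [hv]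
    rw [re_pairing_smul]
    have h3 := hu3 k
    have := mul_lt_mul_of_pos_left h3 (inv_pos.mpr (hupos k))
    calc ‖u k‖⁻¹ * (pairing (u k) ζ).re < ‖u k‖⁻¹ * (1/((k:ℝ)+1) * ‖u k‖) := this
    _ = 1/((k:ℝ)+1) := by
        rw [mul_comm (1/((k:ℝ)+1)) ‖u k‖, ← mul_assoc, inv_mul_cancel₀ (hupos k).ne', one_mul]
  have htend : Tendsto (fun k => (pairing (v (φ k)) ζ).re) atTop (𝓝 ((pairing θ ζ).re)) :=
    ((continuous_re_pairing_left ζ).continuousAt).tendsto.comp hconv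
  have hle : (pairing θ ζ).re ≤ 0 := by
    have h0 : Tendsto (fun k : ℕ => 1/((k:ℝ)+1)) atTop (𝓝 0) :=
      tendsto_one_div_add_atTop_nhds_zero_nat
    refine le_of_tendsto_of_tendsto' htend h0 fun k => ?_
    calc (pairing (v (φ k)) ζ).re ≤ 1/((φ k:ℝ)+1) := (hvlt (φ k)).le
    _ ≤ 1/((k:ℝ)+1) := by
        apply one_div_le_one_div_of_le (by positivity)
        have : (k:ℝ) ≤ (φ k : ℝ) := Nat.cast_le.mpr hφ.le_apply
        linarith
  linarith

/-- The support function `h_K(ζ) = inf_{z ∈ K} Re⟨z,ζ⟩`, with values in `{−∞} ∪ ℝ`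
(modelled inside `EReal`). -/
noncomputable def suppFn {n : ℕ} (K : Set (EuclideanSpace ℂ (Fin n)))
    (ζ : EuclideanSpace ℂ (Fin n)) : EReal :=
  ⨅ z : K, ((pairing (z : EuclideanSpace ℂ (Fin n)) ζ).re : EReal)

lemma exists_min {n : ℕ} {Kc : Set (EuclideanSpace ℂ (Fin n))} (hc : IsCompact Kc)
    (hne : Kc.Nonempty) (ξ : EuclideanSpace ℂ (Fin n)) :
    ∃ z ∈ Kc, sInf ((fun w => (pairing w ξ).re) '' Kc) = (pairing z ξ).re ∧
      ∀ w ∈ Kc, (pairing z ξ).re ≤ (pairing w ξ).re := by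
  obtain ⟨z, hz, hmin⟩ := hc.exists_isMinOn hne ((continuous_re_pairing_left ξ).continuousOn)
  refine ⟨z, hz, ?_, fun w hw => hmin hw⟩
  refine le_antisymm (csInf_le ((hc.image (continuous_re_pairing_left ξ)).bddBelow) ⟨z, hz, rfl⟩) ?_
  exact le_csInf (hne.image _) (by rintro _ ⟨w, hw, rfl⟩; exact hmin hw)

/-- For a nonempty closed `K ⊆ ℂⁿ`, the support function `h_K`, viewed on the unit
sphere, is upper semi-continuous; moreover it is finite (`≠ −∞`) and continuous at each
point of `ĤPC(K)`. -/
theorem suppFn_upperSemicontinuous_and_continuousAt_HPC {n : ℕ}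
    (K : Set (EuclideanSpace ℂ (Fin n))) (hK : K.Nonempty) (hcl : IsClosed K) :
    UpperSemicontinuous (fun ζ : Metric.sphere (0 : EuclideanSpace ℂ (Fin n)) 1 =>
      suppFn K (ζ : EuclideanSpace ℂ (Fin n))) ∧
    ∀ ζ : Metric.sphere (0 : EuclideanSpace ℂ (Fin n)) 1,
      (ζ : EuclideanSpace ℂ (Fin n)) ∈ HPC K →
        suppFn K (ζ : EuclideanSpace ℂ (Fin n)) ≠ ⊥ ∧
        ContinuousAt (fun ξ : Metric.sphere (0 : EuclideanSpace ℂ (Fin n)) 1 =>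
          suppFn K (ξ : EuclideanSpace ℂ (Fin n))) ζ := by
  constructor
  · intro x y hy
    simp only [suppFn] at hy
    obtain ⟨z, hz⟩ := iInf_lt_iff.mp hy
    have hcont : Continuous fun ξ : Metric.sphere (0 : EuclideanSpace ℂ (Fin n)) 1 =>
        (((pairing (z : EuclideanSpace ℂ (Fin n)) ξ).re : ℝ) : EReal) :=
      continuous_coe_real_ereal.comp
        ((continuous_re_pairing_right _).comp continuous_subtype_val)
    filter_upwards [hcont.continuousAt.eventually_mem (isOpen_Iio.mem_nhds hz)] with ξ hξ
    refine lt_of_le_of_lt ?_ hξ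
    exact iInf_le _ z
  · rintro ζs hζ
    obtain ⟨c, hc, R, hcoer⟩ := exists_coercive K hζ
    obtain ⟨z₀, hz₀⟩ := hK
    set ζ : EuclideanSpace ℂ (Fin n) := (ζs : EuclideanSpace ℂ (Fin n)) with hζdef
    have hζ1 : ‖ζ‖ = 1 := mem_sphere_zero_iff_norm.mp ζs.2
    set B : ℝ := (pairing z₀ ζ).re + ‖z₀‖ * (c/2) with hB
    set R₀ : ℝ := max R (max ‖z₀‖ (2*(B+1)/c)) with hR₀def
    have hz₀R₀ : ‖z₀‖ ≤ R₀ := le_max_of_le_right (le_max_left _ _)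
    have hR₀0 : (0:ℝ) ≤ R₀ := le_trans (norm_nonneg z₀) hz₀R₀
    set Kc : Set (EuclideanSpace ℂ (Fin n)) := K ∩ Metric.closedBall 0 R₀ with hKcdef
    have hcomp : IsCompact Kc := (isCompact_closedBall _ _).inter_left hcl
    have hz₀Kc : z₀ ∈ Kc := ⟨hz₀, by simpa [Metric.mem_closedBall, dist_zero_right] using hz₀R₀⟩
    have hne : Kc.Nonempty := ⟨z₀, hz₀Kc⟩
    set g : EuclideanSpace ℂ (Fin n) → ℝ :=
      fun ξ => sInf ((fun w => (pairing w ξ).re) '' Kc) with hgdef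
    have hone : ∀ ξ ξ' : EuclideanSpace ℂ (Fin n), g ξ ≤ g ξ' + R₀ * ‖ξ - ξ'‖ := by
      intro ξ ξ'
      obtain ⟨z', hz', heq, hmin⟩ := exists_min hcomp hne ξ'
      have h1 : g ξ ≤ (pairing z' ξ).re :=
        csInf_le ((hcomp.image (continuous_re_pairing_left ξ)).bddBelow) ⟨z', hz', rfl⟩
      have h2 : (pairing z' ξ).re ≤ (pairing z' ξ').re + ‖z'‖ * ‖ξ - ξ'‖ := re_pairing_le _ _ _
      have h3 : ‖z'‖ ≤ R₀ := by
        simpa [Metric.mem_closedBall, dist_zero_right] using hz'.2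
      have h4 : ‖z'‖ * ‖ξ - ξ'‖ ≤ R₀ * ‖ξ - ξ'‖ :=
        mul_le_mul_of_nonneg_right h3 (norm_nonneg _)
      have h5 : g ξ' = (pairing z' ξ').re := heq
      linarith
    have hgcont : Continuous g := by
      refine LipschitzWith.continuous (K := ⟨R₀, hR₀0⟩) (LipschitzWith.of_dist_le_mul ?_)
      intro ξ ξ'
      rw [Real.dist_eq, dist_eq_norm]
      have h1 := hone ξ ξ'
      have h2 := hone ξ' ξ
      rw [norm_sub_rev ξ' ξ] at h2
      rw [abs_sub_le_iff]
      constructor <;> [skip; skip] <;> change _ ≤ R₀ * ‖ξ - ξ'‖ <;> linarith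
    have hEq : ∀ ξ : EuclideanSpace ℂ (Fin n), ‖ξ‖ = 1 → ‖ξ - ζ‖ ≤ c/2 →
        suppFn K ξ = ((g ξ : ℝ) : EReal) := by
      intro ξ hξ1 hξζ
      obtain ⟨z', hz', heq, hmin⟩ := exists_min hcomp hne ξ
      have hgval : g ξ = (pairing z' ξ).re := heq
      have htop : (pairing z' ξ).re ≤ B := by
        have h1 : (pairing z' ξ).re ≤ (pairing z₀ ξ).re := hmin z₀ hz₀Kc
        have h2 : (pairing z₀ ξ).re ≤ (pairing z₀ ζ).re + ‖z₀‖ * ‖ξ - ζ‖ := re_pairing_le _ _ _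
        have h3 : ‖z₀‖ * ‖ξ - ζ‖ ≤ ‖z₀‖ * (c/2) :=
          mul_le_mul_of_nonneg_left hξζ (norm_nonneg _)
        rw [hB]; linarith
      have hlow : ∀ z ∈ K, (pairing z' ξ).re ≤ (pairing z ξ).re := by
        intro z hzK
        by_cases hzb : ‖z‖ ≤ R₀
        · exact hmin z ⟨hzK, by simpa [Metric.mem_closedBall, dist_zero_right] using hzb⟩
        · push_neg at hzb
          have hzR : R ≤ ‖z‖ := le_trans (le_max_left _ _) hzb.le
          have h1 : c * ‖z‖ ≤ (pairing z ζ).re := hcoer z hzK hzR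
          have h2 : (pairing z ζ).re ≤ (pairing z ξ).re + ‖z‖ * ‖ζ - ξ‖ := re_pairing_le _ _ _
          have h3 : ‖ζ - ξ‖ ≤ c/2 := by rw [norm_sub_rev]; exact hξζ
          have h4 : ‖z‖ * ‖ζ - ξ‖ ≤ ‖z‖ * (c/2) :=
            mul_le_mul_of_nonneg_left h3 (norm_nonneg _)
          have h5 : 2*(B+1)/c ≤ ‖z‖ :=
            le_trans (le_max_of_le_right (le_max_right _ _)) hzb.le
          have h6 : B + 1 ≤ (c/2) * ‖z‖ := by
            have := mul_le_mul_of_nonneg_left h5 (by positivity : (0:ℝ) ≤ c/2)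
            have heq2 : (c/2) * (2*(B+1)/c) = B + 1 := by field_simp
            linarith
          have h7 : ‖z‖ * (c/2) = c/2 * ‖z‖ := mul_comm _ _
          have h8 : c * ‖z‖ = c/2 * ‖z‖ + c/2 * ‖z‖ := by ring
          clear_value ζ B R₀ Kc g
          linarith
      simp only [suppFn]
      rw [hgval]
      refine le_antisymm (iInf_le (fun z : K => ((pairing (z : EuclideanSpace ℂ (Fin n)) ξ).re : EReal)) ⟨z', hz'.1⟩) (le_iInf fun z => ?_)
      exact_mod_cast hlow (z : EuclideanSpace ℂ (Fin n)) z.2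
    have hζself : ‖ζ - ζ‖ ≤ c/2 := by simp; positivity
    refine ⟨by rw [hEq ζ hζ1 hζself]; exact EReal.coe_ne_bot _, ?_⟩
    have hopen : IsOpen {ξ : Metric.sphere (0 : EuclideanSpace ℂ (Fin n)) 1 |
        ‖(ξ : EuclideanSpace ℂ (Fin n)) - ζ‖ < c/2} :=
      isOpen_lt ((continuous_subtype_val.sub continuous_const).norm) continuous_const
    have hnb : {ξ : Metric.sphere (0 : EuclideanSpace ℂ (Fin n)) 1 |
        ‖(ξ : EuclideanSpace ℂ (Fin n)) - ζ‖ < c/2} ∈ 𝓝 ζs := by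
      refine hopen.mem_nhds ?_
      show ‖ζ - ζ‖ < c/2
      simp; positivity
    have hev : (fun ξ : Metric.sphere (0 : EuclideanSpace ℂ (Fin n)) 1 =>
          suppFn K (ξ : EuclideanSpace ℂ (Fin n)))
        =ᶠ[𝓝 ζs] fun ξ => ((g (ξ : EuclideanSpace ℂ (Fin n)) : ℝ) : EReal) := by
      filter_upwards [hnb] with ξ hξ
      exact hEq _ (mem_sphere_zero_iff_norm.mp ξ.2) hξ.le
    have hc2 : ContinuousAt (fun ξ : Metric.sphere (0 : EuclideanSpace ℂ (Fin n)) 1 =>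
        ((g (ξ : EuclideanSpace ℂ (Fin n)) : ℝ) : EReal)) ζs :=
      (continuous_coe_real_ereal.comp (hgcont.comp continuous_subtype_val)).continuousAt
    exact hc2.congr hev.symm
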